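/- Let k ≥ 1. The symmetric game subspace 𝒮_{[4;k]}, i.e., the linear subspace of all tuples (c_1, c_2, c_3, c_4) of payoff functions c_i : (Fin 4 → Fin k) → ℝ satisfying c_i(x) = c_{σ(i)}(x ∘ σ⁻¹) for every permutation σ of Fin 4, every i, and every strategy profile x, has dimension k · C(k+2, 3) over ℝ. -/

import Mathlib

/-- The symmetric game subspace 𝒮_{[n;k]}: the subspace of all tuples of payoff
functions c_i : (Fin n → Fin k) → ℝ with c_i(x) = c_{σ(i)}(x ∘ σ⁻¹) for every
permutation σ, every player i and every strategy profile x. -/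
def symGameSubspace (n k : ℕ) : Submodule ℝ (Fin n → (Fin n → Fin k) → ℝ) where
  carrier := { c | ∀ (σ : Equiv.Perm (Fin n)) (i : Fin n) (x : Fin n → Fin k),
    c i x = c (σ i) (fun j => x (σ⁻¹ j)) }
  add_mem' := by
    intro c d hc hd σ i x
    simp only [Pi.add_apply, hc σ i x, hd σ i x]
  zero_mem' := by intro σ i x; rfl
  smul_mem' := by
    intro a c hc σ i x
    simp only [Pi.smul_apply, hc σ i x]

namespace SGAux

variable {k : ℕ}

/-- permuted tuples with equal associated lists-up-to-permutation are related by a permutation -/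
lemma exists_perm_comp {n : ℕ} {α : Type*} [LinearOrder α] {g h : Fin n → α}
    (hp : (List.ofFn g).Perm (List.ofFn h)) : ∃ τ : Equiv.Perm (Fin n), g ∘ τ = h := by
  have h1 : g ∘ Tuple.sort g = h ∘ Tuple.sort h :=
    List.ofFn_injective (List.Perm.eq_of_sortedLE
      (Tuple.monotone_sort g).sortedLE_ofFn (Tuple.monotone_sort h).sortedLE_ofFn
      (((Tuple.sort g).ofFn_comp_perm g).trans (hp.trans ((Tuple.sort h).ofFn_comp_perm h).symm)))
  refine ⟨Tuple.sort g * (Tuple.sort h)⁻¹, funext fun i => ?_⟩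
  have := congrFun h1 ((Tuple.sort h)⁻¹ i)
  simpa using this

def tail3 (x : Fin 4 → Fin k) : Fin 3 → Fin k := fun i => x i.succ

def mu (i : Fin 4) (x : Fin 4 → Fin k) : Multiset (Fin k) :=
  Multiset.map x (Finset.univ.erase i).val

lemma mu_card (i : Fin 4) (x : Fin 4 → Fin k) : Multiset.card (mu i x) = 3 := by
  simp [mu, Finset.card_erase_of_mem]

def muS (i : Fin 4) (x : Fin 4 → Fin k) : Sym (Fin k) 3 := ⟨mu i x, mu_card i x⟩

lemma mu_perm (σ : Equiv.Perm (Fin 4)) (i : Fin 4) (x : Fin 4 → Fin k) :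
    mu (σ i) (fun j => x (σ⁻¹ j)) = mu i x := by
  unfold mu
  have h : Finset.univ.erase (σ i) = Finset.map σ.toEmbedding (Finset.univ.erase i) := by
    rw [Finset.map_erase, Finset.map_univ_equiv]
    rfl
  rw [h, Finset.map_val, Multiset.map_map]
  congr 1
  funext j
  simp

lemma mu_zero (x : Fin 4 → Fin k) : mu 0 x = ↑(List.ofFn (tail3 x)) := by
  have h : (Finset.univ.erase (0 : Fin 4)).val = ({1, 2, 3} : Multiset (Fin 4)) := by decide
  unfold mu
  rw [h]
  simp [tail3, List.ofFn_succ]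
  rfl

noncomputable def prof (a : Fin k) (m : Sym (Fin k) 3) : Fin 4 → Fin k :=
  Fin.cons a (fun i => m.1.toList.get
    ⟨i.1, by rw [Multiset.length_toList, m.2]; exact i.2⟩)

lemma prof_zero (a : Fin k) (m : Sym (Fin k) 3) : prof a m 0 = a := rfl

lemma ofFn_get_three {α : Type*} : ∀ (l : List α) (h : l.length = 3),
    List.ofFn (fun i : Fin 3 => l.get ⟨i.1, by rw [h]; exact i.2⟩) = l
  | [], h => by simp at h
  | [_], h => by simp at h
  | [_, _], h => by simp at h
  | [_, _, _], _ => by simp [List.ofFn_succ]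
  | _ :: _ :: _ :: _ :: _, h => by simp at h

lemma ofFn_tail3_prof (a : Fin k) (m : Sym (Fin k) 3) :
    List.ofFn (tail3 (prof a m)) = m.1.toList := by
  have hl : m.1.toList.length = 3 := by rw [Multiset.length_toList, m.2]
  have h2 : tail3 (prof a m) = fun i : Fin 3 => m.1.toList.get ⟨i.1, by rw [hl]; exact i.2⟩ := by
    funext i; rfl
  rw [h2, ofFn_get_three _ hl]

lemma muS_zero_prof (a : Fin k) (m : Sym (Fin k) 3) : muS 0 (prof a m) = m := by
  refine Subtype.ext ?_
  show mu 0 (prof a m) = m.1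
  rw [mu_zero, ofFn_tail3_prof, Multiset.coe_toList]

lemma key (c : Fin 4 → (Fin 4 → Fin k) → ℝ) (hc : c ∈ symGameSubspace 4 k)
    (i : Fin 4) (x : Fin 4 → Fin k) : c i x = c 0 (prof (x i) (muS i x)) := by
  -- step 1: move player i to player 0
  set σ : Equiv.Perm (Fin 4) := Equiv.swap i 0 with hσ
  have hσi : σ i = 0 := Equiv.swap_apply_left i 0
  have h1 := hc σ i x
  rw [hσi] at h1
  set y : Fin 4 → Fin k := fun j => x (σ⁻¹ j) with hy
  have hy0 : y 0 = x i := by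
    simp [hy, hσ, Equiv.symm_swap, Equiv.swap_apply_right]
  have hmu : muS 0 y = muS i x := by
    refine Subtype.ext ?_
    have := mu_perm σ i x
    rw [hσi] at this
    exact this
  rw [h1, ← hy0, ← hmu]
  -- step 2: two profiles with the same 0-strategy and same others-multiset
  set a := y 0
  set m := muS 0 y with hm
  have hperm : (List.ofFn (tail3 (prof a m))).Perm (List.ofFn (tail3 y)) := by
    have e1 : (↑(List.ofFn (tail3 (prof a m))) : Multiset (Fin k)) = mu 0 (prof a m) :=
      (mu_zero _).symm
    have e2 : mu 0 (prof a m) = mu 0 y := by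
      have := muS_zero_prof a m
      have h' : (muS 0 (prof a m)).1 = m.1 := by rw [this]
      exact h'
    exact Multiset.coe_eq_coe.mp ((e1.trans e2).trans (mu_zero y))
  obtain ⟨τ, hτ⟩ := exists_perm_comp hperm
  set π' : Equiv.Perm (Fin 4) := Equiv.Perm.decomposeFin.symm (0, τ⁻¹) with hπ'
  have hπ'0 : π' 0 = 0 := Equiv.Perm.decomposeFin_symm_apply_zero 0 τ⁻¹
  have h2 := hc π'⁻¹ 0 y
  have hπ0 : π'⁻¹ 0 = 0 := by
    rw [← hπ'0]; exact Equiv.symm_apply_apply π' 0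
  rw [hπ0] at h2
  have h3 : (fun j => y ((π'⁻¹)⁻¹ j)) = prof a m := by
    funext j
    rw [inv_inv]
    refine Fin.cases ?_ (fun l => ?_) j
    · rw [hπ'0]; rfl
    · have hsucc : π' l.succ = (τ⁻¹ l).succ := by
        rw [hπ']
        rw [Equiv.Perm.decomposeFin_symm_apply_succ]
        simp
      rw [hsucc]
      have : tail3 (prof a m) l = tail3 y (τ⁻¹ l) := by
        conv_rhs => rw [← hτ]
        simp
      exact ((this.symm.trans rfl) : _)
  rw [h3] at h2
  exact h2

def Lmap (f : Fin k × Sym (Fin k) 3 → ℝ) : Fin 4 → (Fin 4 → Fin k) → ℝ :=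
  fun i x => f (x i, muS i x)

lemma Lmap_mem (f : Fin k × Sym (Fin k) 3 → ℝ) : Lmap f ∈ symGameSubspace 4 k := by
  intro σ i x
  unfold Lmap
  congr 1
  refine Prod.ext (by simp) ?_
  refine Subtype.ext ?_
  exact (mu_perm σ i x).symm

noncomputable def theEquiv (k : ℕ) :
    (symGameSubspace 4 k) ≃ₗ[ℝ] ((Fin k × Sym (Fin k) 3) → ℝ) :=
  LinearEquiv.ofLinear
    { toFun := fun c p => c.1 0 (prof p.1 p.2)
      map_add' := fun c d => rfl
      map_smul' := fun r c => rfl }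
    { toFun := fun f => ⟨Lmap f, Lmap_mem f⟩
      map_add' := fun f g => rfl
      map_smul' := fun r f => rfl }
    (by
      refine LinearMap.ext fun f => ?_
      funext p
      show Lmap f 0 (prof p.1 p.2) = f p
      unfold Lmap
      rw [prof_zero, muS_zero_prof])
    (by
      refine LinearMap.ext fun c => ?_
      refine Subtype.ext ?_
      funext i x
      show Lmap (fun p => c.1 0 (prof p.1 p.2)) i x = c.1 i x
      unfold Lmap
      exact (key c.1 c.2 i x).symm)

end SGAux

/-- for k ≥ 1 the symmetric game subspace 𝒮_{[4;k]} has dimension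
k · C(k+2, 3) over ℝ. -/
theorem dim_symGameSubspace_four (k : ℕ) (hk : 1 ≤ k) :
    Module.finrank ℝ (symGameSubspace 4 k) = k * (k + 2).choose 3 := by
  rw [(SGAux.theEquiv k).finrank_eq, Module.finrank_fintype_fun_eq_card,
    Fintype.card_prod, Fintype.card_fin, Sym.card_sym_eq_choose, Fintype.card_fin]
  norm_num
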